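/- arXiv:1607.00531 — 3 statements merged into one kernel-verified Lean document; each statement's English description precedes it below -/
import Mathlib

section
/- Let C ⊆ ℝⁿ be convex, f : ℝⁿ → ℝ continuously differentiable with ∇f Lipschitz continuous on C with constant L_f, and let ρ, h > 0, y, z ∈ ℝⁿ. Suppose b⁺ ∈ C satisfies the first-order optimality condition ⟨∇f(b⁺) + y + ρh³(b⁺ − z), w − b⁺⟩ ≥ 0 for all w ∈ C, and let b ∈ C. Then f(b) + ⟨y, b − z⟩ + (ρh³/2)‖b − z‖² − (f(b⁺) + ⟨y, b⁺ − z⟩ + (ρh³/2)‖b⁺ − z‖²) ≥ (ρh³/2 − L_f)‖b − b⁺‖². -/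
open RealInnerProductSpace

theorem stmt3 {n : ℕ} (C : Set (EuclideanSpace ℝ (Fin n))) (hC : Convex ℝ C)
    (f : EuclideanSpace ℝ (Fin n) → ℝ) (f' : EuclideanSpace ℝ (Fin n) → EuclideanSpace ℝ (Fin n))
    (hf : ∀ x, HasGradientAt f (f' x) x)
    (Lf : ℝ) (hLf : 0 ≤ Lf)
    (hlip : ∀ x ∈ C, ∀ y ∈ C, ‖f' x - f' y‖ ≤ Lf * ‖x - y‖)
    (ρ h : ℝ) (hρ : 0 < ρ) (hh : 0 < h)
    (y z bp : EuclideanSpace ℝ (Fin n)) (hbp : bp ∈ C)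
    (hopt : ∀ w ∈ C, 0 ≤ ⟪f' bp + y + (ρ * h ^ 3) • (bp - z), w - bp⟫)
    (b : EuclideanSpace ℝ (Fin n)) (hbC : b ∈ C) :
    (ρ * h ^ 3 / 2 - Lf) * ‖b - bp‖ ^ 2 ≤
      (f b + ⟪y, b - z⟫ + ρ * h ^ 3 / 2 * ‖b - z‖ ^ 2) -
        (f bp + ⟪y, bp - z⟫ + ρ * h ^ 3 / 2 * ‖bp - z‖ ^ 2) := by
  have hsub : segment ℝ bp b ⊆ C := hC.segment_subset hbp hbC
  set g : EuclideanSpace ℝ (Fin n) → ℝ := fun x => f x - ⟪f' bp, x⟫ with hg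
  set D : EuclideanSpace ℝ (Fin n) → (EuclideanSpace ℝ (Fin n) →L[ℝ] ℝ) := fun x =>
    (InnerProductSpace.toDual ℝ _ (f' x - f' bp) : EuclideanSpace ℝ (Fin n) →L[ℝ] ℝ) with hD
  have hderiv : ∀ x ∈ segment ℝ bp b, HasFDerivWithinAt g (D x) (segment ℝ bp b) x := by
    intro x hx
    have h1 : HasFDerivAt f (InnerProductSpace.toDual ℝ _ (f' x)) x :=
      (hf x).hasFDerivAt
    have h2 : HasFDerivAt (fun w : EuclideanSpace ℝ (Fin n) => ⟪f' bp, w⟫)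
        (InnerProductSpace.toDual ℝ _ (f' bp)) x := by
      have := (InnerProductSpace.toDual ℝ (EuclideanSpace ℝ (Fin n)) (f' bp)).hasFDerivAt (x := x)
      convert this using 1
      ext w
      simp [InnerProductSpace.toDual_apply_apply]
    have := (h1.sub h2).hasFDerivWithinAt (s := segment ℝ bp b)
    simpa [hD, map_sub, hg, Pi.sub_def] using this
  have hbound : ∀ x ∈ segment ℝ bp b, ‖D x‖ ≤ Lf * ‖b - bp‖ := by
    intro x hx
    have hxC : x ∈ C := hsub hx
    have h1 : ‖D x‖ = ‖f' x - f' bp‖ := by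
      rw [hD]; exact (InnerProductSpace.toDual ℝ _).norm_map _
    rw [h1]
    refine le_trans (hlip x hxC bp hbp) (mul_le_mul_of_nonneg_left ?_ hLf)
    rcases hx with ⟨a, t, ha, ht, hat, hx⟩
    have hxx : x - bp = t • (b - bp) := by
      rw [← hx]
      have : a = 1 - t := by linarith
      rw [this]; module
    rw [hxx, norm_smul, Real.norm_eq_abs, abs_of_nonneg ht]
    have ht1 : t ≤ 1 := by linarith
    nlinarith [norm_nonneg (b - bp)]
  have hmvt : ‖g b - g bp‖ ≤ Lf * ‖b - bp‖ * ‖b - bp‖ :=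
    Convex.norm_image_sub_le_of_norm_hasFDerivWithin_le hderiv hbound
      (convex_segment _ _) (left_mem_segment ℝ bp b) (right_mem_segment ℝ bp b)
  have hdescent : f b - f bp - ⟪f' bp, b - bp⟫ ≥ -(Lf * ‖b - bp‖ ^ 2) := by
    have h1 : g b - g bp = f b - f bp - ⟪f' bp, b - bp⟫ := by
      simp only [hg, inner_sub_right]; ring
    rw [Real.norm_eq_abs] at hmvt
    nlinarith [neg_abs_le (g b - g bp), abs_nonneg (g b - g bp)]
  have hoptb := hopt b hbC
  rw [inner_add_left, inner_add_left, real_inner_smul_left] at hoptb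
  have hnorm : ‖b - z‖ ^ 2 = ‖b - bp‖ ^ 2 + 2 * ⟪b - bp, bp - z⟫ + ‖bp - z‖ ^ 2 := by
    have hb : b - z = (b - bp) + (bp - z) := by abel
    rw [hb, norm_add_sq_real]
  have hy : ⟪y, b - z⟫ - ⟪y, bp - z⟫ = ⟪y, b - bp⟫ := by
    rw [← inner_sub_right]; congr 1; abel
  have hsym : ⟪bp - z, b - bp⟫ = ⟪b - bp, bp - z⟫ := real_inner_comm _ _
  have hρh : 0 ≤ ρ * h ^ 3 := le_of_lt (by positivity)
  nlinarith [hoptb, hdescent, sq_nonneg ‖b - bp‖]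
end

section
/- Let g : ℝⁿ → ℝ be convex and differentiable, ρ, h > 0, and b, y ∈ ℝⁿ. If z⁺ satisfies ∇g(z⁺) = y + ρh³(b − z⁺), then for every z ∈ ℝⁿ: g(z) − ⟨y, z⟩ + (ρh³/2)‖b − z‖² − (g(z⁺) − ⟨y, z⁺⟩ + (ρh³/2)‖b − z⁺‖²) ≥ (ρh³/2)‖z − z⁺‖². -/
open RealInnerProductSpace Set

lemma grad_ineq {n : ℕ} {g : EuclideanSpace ℝ (Fin n) → ℝ}
    {G x v : EuclideanSpace ℝ (Fin n)}
    (hg : HasGradientAt g G x) (hconv : ConvexOn ℝ Set.univ g) :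
    g x + ⟪G, v⟫ ≤ g (x + v) := by
  set φ : ℝ → ℝ := fun t => g (x + t • v) with hφ
  have hγ : ∀ t : ℝ, HasDerivAt (fun s : ℝ => x + s • v) v t := by
    intro t
    simpa using ((hasDerivAt_id t).smul_const v).const_add x
  have hco : ConvexOn ℝ Set.univ φ := by
    have h1 := hconv.comp_affineMap (AffineMap.lineMap x (x + v) : ℝ →ᵃ[ℝ] _)
    have : ((AffineMap.lineMap x (x + v) : ℝ →ᵃ[ℝ] _) ⁻¹' univ) = univ := by simp
    rw [this] at h1
    suffices e : φ = g ∘ (AffineMap.lineMap x (x + v) : ℝ →ᵃ[ℝ] _) by rw [e]; exact h1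
    funext t
    simp [φ, AffineMap.lineMap_apply, add_comm]
  have hd : HasDerivAt φ ⟪G, v⟫ 0 := by
    have hF : HasFDerivAt g ((InnerProductSpace.toDual ℝ _) G) ((fun s : ℝ => x + s • v) 0) := by
      simpa using hg.hasFDerivAt
    have := hF.comp_hasDerivAt 0 (hγ 0)
    exact this
  have hsl := hco.le_slope_of_hasDerivWithinAt (mem_univ (0:ℝ)) (mem_univ 1)
    one_pos hd.hasDerivWithinAt
  rw [slope_def_field] at hsl
  simp only [φ, one_smul, zero_smul, add_zero, sub_zero, div_one] at hsl
  linarith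

theorem stmt4 {n : ℕ} (g : EuclideanSpace ℝ (Fin n) → ℝ)
    (g' : EuclideanSpace ℝ (Fin n) → EuclideanSpace ℝ (Fin n))
    (hg : ∀ x, HasGradientAt g (g' x) x)
    (hconv : ConvexOn ℝ Set.univ g)
    (ρ h : ℝ) (hρ : 0 < ρ) (hh : 0 < h)
    (b y zp : EuclideanSpace ℝ (Fin n))
    (hopt : g' zp = y + (ρ * h ^ 3) • (b - zp))
    (z : EuclideanSpace ℝ (Fin n)) :
    ρ * h ^ 3 / 2 * ‖z - zp‖ ^ 2 ≤
      (g z - ⟪y, z⟫ + ρ * h ^ 3 / 2 * ‖b - z‖ ^ 2) -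
        (g zp - ⟪y, zp⟫ + ρ * h ^ 3 / 2 * ‖b - zp‖ ^ 2) := by
  set c := ρ * h ^ 3 with hc
  have h1 : g zp + ⟪g' zp, z - zp⟫ ≤ g z := by
    have := grad_ineq (hg zp) hconv (v := z - zp)
    simpa using this
  have h2 : ⟪g' zp, z - zp⟫ = ⟪y, z - zp⟫ + c * ⟪b - zp, z - zp⟫ := by
    rw [hopt, inner_add_left, real_inner_smul_left]
  have h3 : ‖b - z‖ ^ 2 = ‖b - zp‖ ^ 2 - 2 * ⟪b - zp, z - zp⟫ + ‖z - zp‖ ^ 2 := by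
    have : b - z = (b - zp) - (z - zp) := by abel
    rw [this, norm_sub_sq_real]
  have h4 : ⟪y, z - zp⟫ = ⟪y, z⟫ - ⟪y, zp⟫ := inner_sub_right y z zp
  have h5 : c / 2 * ‖b - z‖ ^ 2 =
      c / 2 * ‖b - zp‖ ^ 2 - c * ⟪b - zp, z - zp⟫ + c / 2 * ‖z - zp‖ ^ 2 := by
    rw [h3]; ring
  linarith
end

section
/- Let J : ℝⁿ → ℝ be continuously differentiable and suppose there exist 0 < M₁ ≤ M₂ such that M₁‖x‖² ≤ xᵀH(b)x ≤ M₂‖x‖² for all x ∈ ℝⁿ and all b in a sublevel set, where H(b) is a symmetric approximation to the Hessian. If the search direction d satisfies the inexactness condition ‖∇J(b) + H(b)d‖ ≤ η‖∇J(b)‖ with 0 < η < M₁/M₂, then cos θ = −⟨∇J(b), d⟩/(‖∇J(b)‖·‖d‖) ≥ (M₁ − ηM₂)/((1+η)M₂) > 0; in particular d is a descent direction. -/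
open RealInnerProductSpace

set_option maxHeartbeats 1000000 in
theorem stmt10 {n : ℕ} (J : EuclideanSpace ℝ (Fin n) → ℝ)
    (hJ : ContDiff ℝ 1 J)
    (b : EuclideanSpace ℝ (Fin n))
    (H : EuclideanSpace ℝ (Fin n) →L[ℝ] EuclideanSpace ℝ (Fin n))
    (hsymm : ∀ x y, ⟪H x, y⟫ = ⟪x, H y⟫)
    (M₁ M₂ : ℝ) (hM₁ : 0 < M₁) (hM : M₁ ≤ M₂)
    (hspec : ∀ x : EuclideanSpace ℝ (Fin n),
      M₁ * ‖x‖ ^ 2 ≤ ⟪x, H x⟫ ∧ ⟪x, H x⟫ ≤ M₂ * ‖x‖ ^ 2)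
    (η : ℝ) (hη0 : 0 < η) (hη : η < M₁ / M₂)
    (hgrad : gradient J b ≠ 0)
    (d : EuclideanSpace ℝ (Fin n))
    (hinexact : ‖gradient J b + H d‖ ≤ η * ‖gradient J b‖) :
    (M₁ - η * M₂) / ((1 + η) * M₂) ≤
        -⟪gradient J b, d⟫ / (‖gradient J b‖ * ‖d‖) ∧
      0 < (M₁ - η * M₂) / ((1 + η) * M₂) ∧
      ⟪gradient J b, d⟫ < 0 := by
  set g : EuclideanSpace ℝ (Fin n) := gradient J b with hg
  set r : EuclideanSpace ℝ (Fin n) := g + H d with hr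
  have hM₂ : (0:ℝ) < M₂ := lt_of_lt_of_le hM₁ hM
  have hηM : η * M₂ < M₁ := (lt_div_iff₀ hM₂).mp hη
  have hG : (0:ℝ) < ‖g‖ := norm_pos_iff.mpr hgrad
  -- H is injective, hence surjective on the finite-dimensional space
  have hinj : Function.Injective (⇑H) := by
    intro x y hxy
    have h0 : H (x - y) = 0 := by rw [map_sub, hxy, sub_self]
    have h1 := (hspec (x - y)).1
    rw [h0] at h1
    simp only [inner_zero_right] at h1
    have : ‖x - y‖ ^ 2 ≤ 0 := by nlinarith
    have : ‖x - y‖ = 0 := by nlinarith [norm_nonneg (x - y)]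
    have : x - y = 0 := norm_eq_zero.mp this
    exact sub_eq_zero.mp this
  have hsurj : Function.Surjective (⇑H) := by
    have h := (LinearMap.injective_iff_surjective
      (f := (H : EuclideanSpace ℝ (Fin n) →ₗ[ℝ] EuclideanSpace ℝ (Fin n)))).mp
    simp only [ContinuousLinearMap.coe_coe] at h
    exact h hinj
  obtain ⟨c, hc⟩ := hsurj g
  -- basic quantities
  have hQ1 : M₁ * ‖c‖ ^ 2 ≤ ⟪c, H c⟫ := (hspec c).1
  have hQg : ⟪c, H c⟫ = ⟪c, g⟫ := by rw [hc]
  have hsymm' : ∀ x y : EuclideanSpace ℝ (Fin n), ⟪x, H y⟫ = ⟪y, H x⟫ := by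
    intro x y
    rw [← hsymm, real_inner_comm]
  -- Cauchy-Schwarz for the H-form with x := c, y := g
  have hPg : M₁ * ‖g‖ ^ 2 ≤ ⟪g, H g⟫ := (hspec g).1
  have hP : (0:ℝ) < ⟪g, H g⟫ := by
    have h1 : (0:ℝ) < M₁ * ‖g‖ ^ 2 := by positivity
    linarith
  have hCS : ⟪c, H g⟫ ^ 2 ≤ ⟪c, H c⟫ * ⟪g, H g⟫ := by
    set P : ℝ := ⟪g, H g⟫
    set S : ℝ := ⟪c, H g⟫
    have hv := (hspec (P • c - S • g)).1
    have hexp : ⟪P • c - S • g, H (P • c - S • g)⟫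
        = P^2 * ⟪c, H c⟫ - 2 * P * S * S + S^2 * P := by
      have h1 : ⟪g, H c⟫ = S := hsymm' g c
      simp only [map_sub, map_smul, inner_sub_left, inner_sub_right,
        real_inner_smul_left, real_inner_smul_right, h1]
      ring
    have hv' : 0 ≤ P^2 * ⟪c, H c⟫ - 2 * P * S * S + S^2 * P := by
      rw [← hexp]
      exact le_trans (by positivity) hv
    nlinarith [hv', hP]
  -- G² ≤ M₂ * Q
  have hgHc : ⟪c, H g⟫ = ‖g‖ ^ 2 := by
    rw [← hsymm' g c, hc, real_inner_self_eq_norm_sq]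
  have hPub : ⟪g, H g⟫ ≤ M₂ * ‖g‖ ^ 2 := (hspec g).2
  have hQpos : (0:ℝ) < ⟪c, H c⟫ := by
    by_contra hcon
    push_neg at hcon
    have h2 : ⟪c, H c⟫ * ⟪g, H g⟫ ≤ 0 := mul_nonpos_of_nonpos_of_nonneg hcon hP.le
    rw [hgHc] at hCS
    nlinarith [pow_pos (pow_pos hG 2) 2]
  have hG2Q : ‖g‖ ^ 2 ≤ M₂ * ⟪c, H c⟫ := by
    have h4 : (‖g‖ ^ 2) ^ 2 ≤ ⟪c, H c⟫ * (M₂ * ‖g‖ ^ 2) := by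
      nlinarith [hCS, hgHc, hQpos]
    nlinarith [hG, sq_nonneg ‖g‖]
  -- ‖c‖ ≤ G / M₁
  have hcg : ⟪c, g⟫ ≤ ‖c‖ * ‖g‖ := real_inner_le_norm c g
  have hcG : M₁ * ‖c‖ ≤ ‖g‖ := by
    rcases eq_or_lt_of_le (norm_nonneg c) with h0 | h0
    · rw [← h0]; simpa using hG.le
    · nlinarith [hQ1, hQg, hcg]
  -- inner product with residual
  have hrn : ‖r‖ ≤ η * ‖g‖ := hinexact
  have hcr : ⟪c, r⟫ ≤ ‖c‖ * (η * ‖g‖) := by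
    calc ⟪c, r⟫ ≤ ‖c‖ * ‖r‖ := real_inner_le_norm c r
    _ ≤ ‖c‖ * (η * ‖g‖) := by
        apply mul_le_mul_of_nonneg_left hrn (norm_nonneg c)
  -- key identity : ⟪g, d⟫ = ⟪c, r⟫ - ⟪c, H c⟫
  have hid : ⟪g, d⟫ = ⟪c, r⟫ - ⟪c, H c⟫ := by
    have h1 : ⟪g, d⟫ = ⟪c, H d⟫ := by rw [← hc, hsymm]
    have h2 : H d = r - g := by rw [hr]; abel
    rw [h1, h2, ← hc, inner_sub_right]
  -- lower bound on -⟪g, d⟫ (times M₁ M₂)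
  have hlow : (M₁ - η * M₂) * ‖g‖ ^ 2 ≤ M₁ * M₂ * (-⟪g, d⟫) := by
    have h1 : M₁ * M₂ * (-⟪g, d⟫) = M₁ * M₂ * ⟪c, H c⟫ - M₁ * M₂ * ⟪c, r⟫ := by
      rw [hid]; ring
    have h2a : M₁ * ⟪c, r⟫ ≤ M₁ * (‖c‖ * (η * ‖g‖)) :=
      mul_le_mul_of_nonneg_left hcr hM₁.le
    have h2b : M₁ * ‖c‖ * (η * ‖g‖) ≤ ‖g‖ * (η * ‖g‖) :=
      mul_le_mul_of_nonneg_right hcG (by positivity)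
    have h2c : M₁ * ⟪c, r⟫ ≤ η * ‖g‖ ^ 2 := by nlinarith [h2a, h2b]
    have h2 := mul_le_mul_of_nonneg_left h2c hM₂.le
    have h3 := mul_le_mul_of_nonneg_left hG2Q hM₁.le
    nlinarith [h2, h3]
  have hgd : ⟪g, d⟫ < 0 := by nlinarith [hlow, hG, sq_nonneg ‖g‖]
  have hTpos : 0 < (M₁ - η * M₂) / ((1 + η) * M₂) := by
    apply div_pos (by linarith) (by nlinarith)
  refine ⟨?_, hTpos, hgd⟩
  -- ‖d‖ bound
  have hd0 : d ≠ 0 := by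
    intro h
    rw [h, inner_zero_right] at hgd
    exact lt_irrefl _ hgd
  have hD : (0:ℝ) < ‖d‖ := norm_pos_iff.mpr hd0
  have hHd : ‖H d‖ ≤ (1 + η) * ‖g‖ := by
    have h2 : H d = r - g := by rw [hr]; abel
    calc ‖H d‖ = ‖r - g‖ := by rw [h2]
    _ ≤ ‖r‖ + ‖g‖ := norm_sub_le r g
    _ ≤ η * ‖g‖ + ‖g‖ := by linarith
    _ = (1 + η) * ‖g‖ := by ring
  have hdHd : ⟪d, H d⟫ ≤ ‖d‖ * ((1 + η) * ‖g‖) := by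
    calc ⟪d, H d⟫ ≤ ‖d‖ * ‖H d‖ := real_inner_le_norm d (H d)
    _ ≤ ‖d‖ * ((1 + η) * ‖g‖) := mul_le_mul_of_nonneg_left hHd (norm_nonneg d)
  have hdG : M₁ * ‖d‖ ≤ (1 + η) * ‖g‖ := by
    have h1 := (hspec d).1
    nlinarith [hdHd, hD]
  -- conclude
  rw [le_div_iff₀ (by positivity), div_mul_eq_mul_div, div_le_iff₀ (by positivity)]
  nlinarith [hlow, hdG, hG, hD, mul_le_mul_of_nonneg_left hdG (mul_pos hG (by linarith : (0:ℝ) < M₁ - η * M₂)).le]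
end
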